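/- Let H_1 = Σ_{α∈S} (ε_1/m^{1/p}) P_α and H_2 = Σ_{α∈S} (ε_2/m^{1/p}) P_α, where S is a set of m mutually anticommuting non-identity n-qubit Pauli matrices and ε_2 > ε_1 ≥ 0. Then the operator norm of the difference satisfies ||H_1 − H_2|| = (ε_2 − ε_1)/m^{1/p − 1/2}, while the Pauli p-norm satisfies ||H_1 − H_2||_{Pauli,p} = ε_2 − ε_1. -/

import Mathlib

open scoped BigOperators

attribute [local instance] Classical.propDecidable

/-- The four single-qubit Pauli matrices `I, X, Y, Z`. -/
noncomputable def pauliOne : Fin 4 → Matrix (Fin 2) (Fin 2) ℂ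
  | 0 => 1
  | 1 => !![0, 1; 1, 0]
  | 2 => !![0, -Complex.I; Complex.I, 0]
  | 3 => !![1, 0; 0, -1]

/-- The `n`-qubit Pauli matrix indexed by `α : Fin n → Fin 4`, given as the
tensor product of the single-qubit Paulis `pauliOne (α i)`. -/
noncomputable def Pauli (n : ℕ) (α : Fin n → Fin 4) :
    Matrix (Fin n → Fin 2) (Fin n → Fin 2) ℂ :=
  Matrix.of fun x y => ∏ i, pauliOne (α i) (x i) (y i)

lemma pauliOne_mul_self (σ : Fin 4) : pauliOne σ * pauliOne σ = 1 := by
  fin_cases σ <;>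
    · ext i j
      fin_cases i <;> fin_cases j <;>
        simp [pauliOne, Matrix.mul_apply, Fin.sum_univ_two, Matrix.one_apply,
          Complex.I_mul_I] <;> ring_nf <;> simp [Complex.I_sq]

lemma pauliOne_trace_mul (σ τ : Fin 4) :
    (pauliOne σ * pauliOne τ).trace = if σ = τ then 2 else 0 := by
  fin_cases σ <;> fin_cases τ <;>
    simp [pauliOne, Matrix.trace, Matrix.mul_apply, Fin.sum_univ_two, Matrix.diag,
      Matrix.one_apply, Complex.I_mul_I] <;> ring_nf <;> simp [Complex.I_sq] <;> ring

lemma pauliOne_conjTranspose (σ : Fin 4) : Matrix.conjTranspose (pauliOne σ) = pauliOne σ := by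
  fin_cases σ <;>
    · ext i j
      fin_cases i <;> fin_cases j <;>
        simp [pauliOne, Matrix.conjTranspose_apply, Matrix.one_apply]

lemma Pauli_mul (n : ℕ) (α β : Fin n → Fin 4) :
    Pauli n α * Pauli n β =
      Matrix.of fun x y => ∏ i, (pauliOne (α i) * pauliOne (β i)) (x i) (y i) := by
  ext x y
  simp only [Matrix.mul_apply, Pauli, Matrix.of_apply]
  simp_rw [← Finset.prod_mul_distrib]
  rw [Fintype.prod_sum]

lemma Pauli_sq (n : ℕ) (α : Fin n → Fin 4) : Pauli n α * Pauli n α = 1 := by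
  rw [Pauli_mul]
  ext x y
  simp only [Matrix.of_apply, pauliOne_mul_self, Matrix.one_apply]
  by_cases h : x = y
  · subst h; simp
  · rw [if_neg h]
    obtain ⟨i, hi⟩ := Function.ne_iff.mp h
    exact Finset.prod_eq_zero (Finset.mem_univ i) (by simp [hi])

lemma Pauli_conjTranspose (n : ℕ) (α : Fin n → Fin 4) :
    Matrix.conjTranspose (Pauli n α) = Pauli n α := by
  ext x y
  simp only [Matrix.conjTranspose_apply, Pauli, Matrix.of_apply]
  rw [star_prod]
  refine Finset.prod_congr rfl fun i _ => ?_
  have := congrFun (congrFun (pauliOne_conjTranspose (α i)) (x i)) (y i)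
  simpa [Matrix.conjTranspose_apply] using this

lemma Pauli_trace_mul (n : ℕ) (α β : Fin n → Fin 4) :
    (Pauli n α * Pauli n β).trace = if α = β then (2 : ℂ) ^ n else 0 := by
  rw [Pauli_mul]
  have : (Matrix.of fun (x y : Fin n → Fin 2) => ∏ i, (pauliOne (α i) * pauliOne (β i)) (x i) (y i)).trace
      = ∏ i, (pauliOne (α i) * pauliOne (β i)).trace := by
    simp only [Matrix.trace, Matrix.diag, Matrix.of_apply]
    rw [Fintype.prod_sum fun i k => (pauliOne (α i) * pauliOne (β i)) k k]
  rw [this]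
  simp_rw [pauliOne_trace_mul]
  by_cases h : α = β
  · subst h; simp
  · obtain ⟨i, hi⟩ := Function.ne_iff.mp h
    rw [if_neg h]
    exact Finset.prod_eq_zero (Finset.mem_univ i) (by simp [hi])

lemma sum_pauli_sq (n : ℕ) (S : Finset (Fin n → Fin 4))
    (hanti : ∀ α ∈ S, ∀ β ∈ S, α ≠ β →
        Pauli n α * Pauli n β = -(Pauli n β * Pauli n α)) :
    (∑ α ∈ S, Pauli n α) * (∑ α ∈ S, Pauli n α) = (S.card : ℂ) • 1 := by
  rw [Finset.sum_mul_sum]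
  have hsplit : ∑ α ∈ S, ∑ β ∈ S, Pauli n α * Pauli n β
      = ∑ x ∈ (S ×ˢ S), Pauli n x.1 * Pauli n x.2 := by
    rw [Finset.sum_product]
  rw [hsplit, ← Finset.sum_filter_add_sum_filter_not (S ×ˢ S) (fun x => x.1 = x.2)]
  have hdiag : ∑ x ∈ (S ×ˢ S).filter (fun x => x.1 = x.2), Pauli n x.1 * Pauli n x.2
      = (S.card : ℂ) • 1 := by
    have heq : ∑ x ∈ (S ×ˢ S).filter (fun x => x.1 = x.2), Pauli n x.1 * Pauli n x.2
        = ∑ _x ∈ (S ×ˢ S).filter (fun x => x.1 = x.2), (1 : Matrix (Fin n → Fin 2) (Fin n → Fin 2) ℂ) := by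
      refine Finset.sum_congr rfl fun x hx => ?_
      simp only [Finset.mem_filter] at hx
      rw [hx.2, Pauli_sq]
    rw [heq, Finset.sum_const]
    have hcard : ((S ×ˢ S).filter (fun x => x.1 = x.2)).card = S.card := by
      apply Finset.card_nbij (fun x => x.1)
      · intro x hx; simp only [Finset.mem_coe, Finset.mem_filter, Finset.mem_product] at hx; exact hx.1.1
      · intro x hx y hy hxy
        simp only [Finset.mem_coe, Finset.mem_filter, Finset.mem_product] at hx hy
        exact Prod.ext hxy (hx.2 ▸ hy.2 ▸ hxy)
      · intro a ha
        refine ⟨(a, a), ?_, rfl⟩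
        simp only [Finset.mem_coe, Finset.mem_filter, Finset.mem_product] at ha ⊢
        exact ⟨⟨ha, ha⟩, trivial⟩
    rw [hcard, Nat.cast_smul_eq_nsmul]
  have hT : ∑ x ∈ (S ×ˢ S).filter (fun x => ¬ x.1 = x.2), Pauli n x.1 * Pauli n x.2 = 0 := by
    set T := ∑ x ∈ (S ×ˢ S).filter (fun x => ¬ x.1 = x.2), Pauli n x.1 * Pauli n x.2 with hTdef
    have hswap : T = -T := by
      calc T = ∑ x ∈ (S ×ˢ S).filter (fun x => ¬ x.1 = x.2), -(Pauli n x.2 * Pauli n x.1) := by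
              refine Finset.sum_congr rfl fun x hx => ?_
              simp only [Finset.mem_filter, Finset.mem_product] at hx
              exact hanti _ hx.1.1 _ hx.1.2 hx.2
        _ = -∑ x ∈ (S ×ˢ S).filter (fun x => ¬ x.1 = x.2), Pauli n x.2 * Pauli n x.1 := by
              rw [Finset.sum_neg_distrib]
        _ = -T := by
              congr 1
              apply Finset.sum_nbij' (fun x => x.swap) (fun x => x.swap)
              · intro x hx; simp only [Finset.mem_filter, Finset.mem_product] at *
                exact ⟨⟨hx.1.2, hx.1.1⟩, fun h => hx.2 h.symm⟩
              · intro x hx; simp only [Finset.mem_filter, Finset.mem_product] at *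
                exact ⟨⟨hx.1.2, hx.1.1⟩, fun h => hx.2 h.symm⟩
              · intro x _; rfl
              · intro x _; rfl
              · intro x _; rfl
    have h2 : (2 : ℂ) • T = 0 := by
      rw [two_smul]
      nth_rewrite 1 [hswap]
      simp
    rcases smul_eq_zero.mp h2 with h | h
    · exact absurd h two_ne_zero
    · exact h
  rw [hdiag, hT, add_zero]


set_option synthInstance.maxHeartbeats 1000000 in
set_option maxHeartbeats 1000000 in
/-- For `H₁ = ∑_{α∈S} (ε₁/m^{1/p}) P_α` and `H₂ = ∑_{α∈S} (ε₂/m^{1/p}) P_α`, with `S` a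
set of `m` mutually anticommuting non-identity Pauli matrices and `ε₂ > ε₁ ≥ 0`:
the operator norm satisfies `‖H₁ − H₂‖ = (ε₂ − ε₁)/m^{1/p − 1/2}`, while the Pauli
`p`-norm (the `ℓ_p`-norm of the Pauli coefficient vector, with coefficients
`Tr((H₁−H₂)P_α)/2^n`) equals `ε₂ − ε₁`. -/
theorem stmt19 (n m : ℕ) (hm : 0 < m)
    (S : Finset (Fin n → Fin 4)) (hScard : S.card = m)
    (hSid : (fun _ => (0 : Fin 4)) ∉ S)
    (hanti : ∀ α ∈ S, ∀ β ∈ S, α ≠ β →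
        Pauli n α * Pauli n β = -(Pauli n β * Pauli n α))
    (p : ℝ) (hp : 1 ≤ p)
    (ε₁ ε₂ : ℝ) (hε₁ : 0 ≤ ε₁) (hε : ε₁ < ε₂)
    (H₁ H₂ : Matrix (Fin n → Fin 2) (Fin n → Fin 2) ℂ)
    (hH₁ : H₁ = ∑ α ∈ S, ((ε₁ / (m : ℝ) ^ (1 / p) : ℝ) : ℂ) • Pauli n α)
    (hH₂ : H₂ = ∑ α ∈ S, ((ε₂ / (m : ℝ) ^ (1 / p) : ℝ) : ℂ) • Pauli n α) :
    ‖Matrix.toEuclideanCLM (𝕜 := ℂ) (H₁ - H₂)‖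
        = (ε₂ - ε₁) / (m : ℝ) ^ (1 / p - 1 / 2) ∧
    (∑ α : Fin n → Fin 4,
        ‖((H₁ - H₂) * Pauli n α).trace / 2 ^ n‖ ^ p) ^ (1 / p)
      = ε₂ - ε₁ := by
  have hm' : (0:ℝ) < m := Nat.cast_pos.mpr hm
  have hp0 : p ≠ 0 := by positivity
  have hmp : (0:ℝ) < (m:ℝ) ^ (1/p) := Real.rpow_pos_of_pos hm' _
  have hε' : (0:ℝ) < ε₂ - ε₁ := by linarith
  set d : ℝ := (ε₂ - ε₁) / (m:ℝ) ^ (1/p) with hd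
  have hd0 : 0 < d := div_pos hε' hmp
  set A := ∑ α ∈ S, Pauli n α with hA
  have hdiff : H₁ - H₂ = ((-d : ℝ) : ℂ) • A := by
    rw [hH₁, hH₂, ← Finset.sum_sub_distrib, Finset.smul_sum]
    refine Finset.sum_congr rfl fun α _ => ?_
    rw [← sub_smul]
    congr 1
    rw [hd]
    push_cast
    have h0 : (((m:ℝ) ^ (1/p) : ℝ) : ℂ) ≠ 0 := by
      exact_mod_cast hmp.ne'
    field_simp
    ring
  have htr : ∀ α, ((H₁ - H₂) * Pauli n α).trace
      = if α ∈ S then ((-d : ℝ) : ℂ) * 2 ^ n else 0 := by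
    intro α
    rw [hdiff, hA, Matrix.smul_mul, Finset.sum_mul, Matrix.trace_smul, Matrix.trace_sum]
    simp_rw [Pauli_trace_mul]
    rw [Finset.sum_ite_eq' S α (fun _ => (2:ℂ)^n)]
    by_cases h : α ∈ S <;> simp [h]
  have habs : ∀ α, ‖((H₁ - H₂) * Pauli n α).trace / 2 ^ n‖
      = if α ∈ S then d else 0 := by
    intro α
    rw [htr]
    have h2 : ((2:ℂ)^n) ≠ 0 := pow_ne_zero _ two_ne_zero
    split_ifs with h
    · rw [mul_div_assoc, div_self h2, mul_one]
      simp [abs_of_pos hd0]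
    · simp
  constructor
  · -- operator norm
    have hA2 : A * A = (m : ℂ) • 1 := by
      rw [hA, sum_pauli_sq n S hanti, hScard]
    have hAH : Matrix.conjTranspose A = A := by
      rw [hA, Matrix.conjTranspose_sum]
      exact Finset.sum_congr rfl fun α _ => Pauli_conjTranspose n α
    have hM2 : star (H₁ - H₂) * (H₁ - H₂) = ((d^2 * m : ℝ) : ℂ) • 1 := by
      rw [Matrix.star_eq_conjTranspose, hdiff, Matrix.conjTranspose_smul, hAH,
        Matrix.smul_mul, Matrix.mul_smul, hA2, smul_smul, smul_smul]
      congr 1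
      rw [Complex.star_def, Complex.conj_ofReal]
      push_cast
      ring
    set T := Matrix.toEuclideanCLM (𝕜 := ℂ) (H₁ - H₂) with hT
    have h1 : ‖ContinuousLinearMap.adjoint T ∘L T‖ = ‖T‖ * ‖T‖ :=
      ContinuousLinearMap.norm_adjoint_comp_self T
    have h1' : ContinuousLinearMap.adjoint T ∘L T = star T * T := by
      rw [← ContinuousLinearMap.star_eq_adjoint]; rfl
    have h2 : star T * T = ((d^2 * m : ℝ) : ℂ) • 1 := by
      rw [hT, ← map_star, ← map_mul, hM2, map_smul, map_one]
    have h3 : ‖T‖ * ‖T‖ = d^2 * m := by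
      haveI : Nontrivial (EuclideanSpace ℂ (Fin n → Fin 2)) := inferInstance
      rw [← h1, h1', h2, ← Algebra.algebraMap_eq_smul_one, norm_algebraMap']
      rw [Complex.norm_real, Real.norm_eq_abs, abs_of_nonneg (by positivity)]
    have h4 : ‖T‖ = d * Real.sqrt m := by
      have := Real.sqrt_mul_self (norm_nonneg T)
      rw [← this, h3]
      rw [Real.sqrt_mul (by positivity), Real.sqrt_sq hd0.le]
    rw [h4]
    rw [Real.sqrt_eq_rpow, Real.rpow_sub hm', hd]
    have h5 : (m:ℝ) ^ (1/2 : ℝ) ≠ 0 := (Real.rpow_pos_of_pos hm' _).ne'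
    field_simp
  · -- Pauli p-norm
    have hsum : ∑ α : Fin n → Fin 4,
        ‖((H₁ - H₂) * Pauli n α).trace / 2 ^ n‖ ^ p
        = (ε₂ - ε₁) ^ p := by
      have : ∀ α : Fin n → Fin 4,
          ‖((H₁ - H₂) * Pauli n α).trace / 2 ^ n‖ ^ p
          = if α ∈ S then d ^ p else 0 := by
        intro α
        rw [habs]
        split_ifs with h
        · rfl
        · exact Real.zero_rpow hp0
      simp_rw [this]
      rw [Finset.sum_ite_mem, Finset.univ_inter, Finset.sum_const, hScard,
        nsmul_eq_mul]
      rw [hd, Real.div_rpow hε'.le hmp.le, ← Real.rpow_mul hm'.le,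
        one_div_mul_cancel hp0, Real.rpow_one, mul_comm, div_mul_cancel₀ _ hm'.ne']
    rw [hsum, ← Real.rpow_mul hε'.le, mul_one_div_cancel hp0, Real.rpow_one]
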